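/- If n ≥ 2 and a league outcome with n teams is tied with common score 2n−1, then every team has exactly 1 victory, 1 defeat, and 2n−4 draws among its 2(n−1) matches. -/

import Mathlib

open Finset

inductive MatchResult : Type
  | homeWin : MatchResult
  | draw : MatchResult
  | awayWin : MatchResult
  deriving DecidableEq

instance : Fintype MatchResult :=
  ⟨{.homeWin, .draw, .awayWin}, fun x => by cases x <;> simp⟩

/-- A league outcome: a result for each ordered pair of distinct teams
(the first component is the home team). -/
abbrev LeagueOutcome (n : ℕ) : Type :=
  {p : Fin n × Fin n // p.1 ≠ p.2} → MatchResult

/-- Points earned by the home team. -/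
def homePts : MatchResult → ℕ
  | .homeWin => 3
  | .draw => 1
  | .awayWin => 0

/-- Points earned by the away team. -/
def awayPts : MatchResult → ℕ
  | .homeWin => 0
  | .draw => 1
  | .awayWin => 3

/-- Total points of team `i`: sum over all matches of the points `i` earns in them. -/
def totalPoints {n : ℕ} (r : LeagueOutcome n) (i : Fin n) : ℕ :=
  ∑ m : {p : Fin n × Fin n // p.1 ≠ p.2},
    ((if m.val.1 = i then homePts (r m) else 0) +
     (if m.val.2 = i then awayPts (r m) else 0))

/-- Total points the other teams earn in their matches against team `i`. -/
def oppPoints {n : ℕ} (r : LeagueOutcome n) (i : Fin n) : ℕ :=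
  ∑ m : {p : Fin n × Fin n // p.1 ≠ p.2},
    ((if m.val.1 = i then awayPts (r m) else 0) +
     (if m.val.2 = i then homePts (r m) else 0))

/-- Number of matches that team `i` wins. -/
def wins {n : ℕ} (r : LeagueOutcome n) (i : Fin n) : ℕ :=
  (Finset.univ.filter (fun m : {p : Fin n × Fin n // p.1 ≠ p.2} =>
    (m.val.1 = i ∧ r m = .homeWin) ∨ (m.val.2 = i ∧ r m = .awayWin))).card

/-- Number of matches that team `i` draws. -/
def draws {n : ℕ} (r : LeagueOutcome n) (i : Fin n) : ℕ :=
  (Finset.univ.filter (fun m : {p : Fin n × Fin n // p.1 ≠ p.2} =>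
    (m.val.1 = i ∨ m.val.2 = i) ∧ r m = .draw)).card

/-- Number of matches that team `i` loses. -/
def losses {n : ℕ} (r : LeagueOutcome n) (i : Fin n) : ℕ :=
  (Finset.univ.filter (fun m : {p : Fin n × Fin n // p.1 ≠ p.2} =>
    (m.val.1 = i ∧ r m = .awayWin) ∨ (m.val.2 = i ∧ r m = .homeWin))).card


section Aux

variable {n : ℕ} (r : LeagueOutcome n) (i : Fin n)

private lemma diag_eq (n : ℕ) :
    (univ.filter fun p : Fin n × Fin n => p.1 = p.2) = univ.image (fun j => (j, j)) := by
  ext ⟨a, b⟩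
  simp only [mem_filter, mem_univ, true_and, mem_image]
  constructor
  · rintro rfl; exact ⟨a, rfl⟩
  · rintro ⟨j, hj⟩; cases hj; rfl

private lemma diag_inj : Function.Injective (fun j : Fin n => (j, j)) :=
  fun a b h => congrArg Prod.fst h

private lemma card_M (n : ℕ) :
    Fintype.card {p : Fin n × Fin n // p.1 ≠ p.2} + n = n * n := by
  rw [Fintype.card_subtype]
  have h1 := Finset.card_filter_add_card_filter_not
    (s := (univ : Finset (Fin n × Fin n))) (p := fun p => p.1 = p.2)
  have h2 : (univ.filter fun p : Fin n × Fin n => p.1 = p.2).card = n := by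
    rw [diag_eq, Finset.card_image_of_injective _ diag_inj, card_univ, Fintype.card_fin]
  have h3 : (univ : Finset (Fin n × Fin n)).card = n * n := by
    simp [card_univ]
  simp only [ne_eq] at *
  omega

private lemma sum_subtype_ne (f : Fin n × Fin n → ℕ) :
    ∑ m : {p : Fin n × Fin n // p.1 ≠ p.2}, f m.val
      = ∑ p ∈ Finset.univ.filter (fun p : Fin n × Fin n => p.1 ≠ p.2), f p :=
  (Finset.sum_subtype _ (by simp) f).symm

private lemma count_involving :
    ∑ m : {p : Fin n × Fin n // p.1 ≠ p.2},
      ((if m.val.1 = i then 1 else 0) + (if m.val.2 = i then 1 else 0)) = 2 * n - 2 := by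
  rw [sum_subtype_ne (fun p => (if p.1 = i then 1 else 0) + (if p.2 = i then 1 else 0))]
  have h1 : ∑ p : Fin n × Fin n,
      ((if p.1 = i then 1 else 0) + (if p.2 = i then 1 else 0)) = 2 * n := by
    rw [Finset.sum_add_distrib, Fintype.sum_prod_type, Fintype.sum_prod_type]
    simp [Finset.sum_ite_eq, Finset.sum_ite_eq', Finset.sum_const, Finset.card_univ,
      apply_ite Finset.card]
    omega
  have h2 : ∑ p ∈ (univ.filter fun p : Fin n × Fin n => p.1 = p.2),
      ((if p.1 = i then 1 else 0) + (if p.2 = i then 1 else 0)) = 2 := by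
    rw [diag_eq, Finset.sum_image (fun a _ b _ h => diag_inj h)]
    simp [Finset.sum_add_distrib, Finset.sum_ite_eq']
  have h3 := Finset.sum_filter_add_sum_filter_not (univ : Finset (Fin n × Fin n))
    (fun p => p.1 = p.2)
    (fun p => (if p.1 = i then 1 else 0) + (if p.2 = i then 1 else 0))
  simp only [ne_eq] at *
  omega

private lemma pts_eq : totalPoints r i = 3 * wins r i + draws r i := by
  unfold totalPoints wins draws
  rw [Finset.card_filter, Finset.card_filter, Finset.mul_sum, ← Finset.sum_add_distrib]
  refine Finset.sum_congr rfl fun m _ => ?_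
  obtain ⟨⟨a, b⟩, hab⟩ := m
  simp only [ne_eq] at hab
  rcases hr : r ⟨(a, b), hab⟩ with _ | _ | _ <;>
    by_cases ha : a = i <;> by_cases hb : b = i <;>
      simp_all [homePts, awayPts] <;> omega

private lemma wdl_eq : wins r i + draws r i + losses r i = 2 * n - 2 := by
  unfold wins draws losses
  rw [Finset.card_filter, Finset.card_filter, Finset.card_filter,
    ← Finset.sum_add_distrib, ← Finset.sum_add_distrib]
  rw [show (2 * n - 2) = ∑ m : {p : Fin n × Fin n // p.1 ≠ p.2},
      ((if m.val.1 = i then 1 else 0) + (if m.val.2 = i then 1 else 0))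
    from (count_involving i).symm]
  refine Finset.sum_congr rfl fun m _ => ?_
  obtain ⟨⟨a, b⟩, hab⟩ := m
  simp only [ne_eq] at hab
  rcases hr : r ⟨(a, b), hab⟩ with _ | _ | _ <;>
    by_cases ha : a = i <;> by_cases hb : b = i <;>
      simp_all [homePts, awayPts] <;> omega

private lemma sum_totalPoints :
    ∑ j : Fin n, totalPoints r j
      = 2 * Fintype.card {p : Fin n × Fin n // p.1 ≠ p.2} + ∑ j : Fin n, wins r j := by
  have htot : ∑ j : Fin n, totalPoints r j
      = ∑ m : {p : Fin n × Fin n // p.1 ≠ p.2}, (homePts (r m) + awayPts (r m)) := by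
    unfold totalPoints
    rw [Finset.sum_comm]
    refine Finset.sum_congr rfl fun m _ => ?_
    simp [Finset.sum_add_distrib, Finset.sum_ite_eq]
  have hw : ∑ j : Fin n, wins r j
      = ∑ m : {p : Fin n × Fin n // p.1 ≠ p.2}, (if r m = .draw then 0 else 1) := by
    unfold wins
    simp only [Finset.card_filter]
    rw [Finset.sum_comm]
    refine Finset.sum_congr rfl fun m _ => ?_
    rcases hr : r m with _ | _ | _ <;> simp [hr, Finset.sum_ite_eq]
  rw [htot, hw]
  have : ∀ m : {p : Fin n × Fin n // p.1 ≠ p.2},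
      homePts (r m) + awayPts (r m) = 2 + (if r m = .draw then 0 else 1) := by
    intro m
    rcases hr : r m with _ | _ | _ <;> simp [hr, homePts, awayPts]
  rw [Finset.sum_congr rfl fun m _ => this m, Finset.sum_add_distrib,
    Finset.sum_const, card_univ, smul_eq_mul, mul_comm]

end Aux

/-- in a league tied with common score `2n−1`, every team has exactly
1 victory, 1 defeat and `2n−4` draws. -/
theorem tied_two_n_sub_one (n : ℕ) (hn : 2 ≤ n) (r : LeagueOutcome n)
    (h : ∀ i, totalPoints r i = 2 * n - 1) :
    ∀ i, wins r i = 1 ∧ losses r i = 1 ∧ draws r i = 2 * n - 4 := by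
  obtain ⟨k, rfl⟩ : ∃ k, n = 2 + k := ⟨n - 2, by omega⟩
  have hC := card_M (2 + k)
  have hsumT : ∑ j : Fin (2 + k), totalPoints r j = (2 + k) * (2 * (2 + k) - 1) := by
    rw [Finset.sum_congr rfl fun j _ => h j, Finset.sum_const, card_univ,
      Fintype.card_fin, smul_eq_mul]
  have hglob := sum_totalPoints r
  rw [hsumT] at hglob
  set C := Fintype.card {p : Fin (2 + k) × Fin (2 + k) // p.1 ≠ p.2} with hCdef
  set W := ∑ j : Fin (2 + k), wins r j with hWdef
  have e : (2 + k) * (2 * (2 + k) - 1) + (2 + k) = 2 * ((2 + k) * (2 + k)) := by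
    have h1 : 2 * (2 + k) - 1 = 2 * k + 3 := by omega
    rw [h1]; ring
  rw [← hC] at e
  have hWn : W = 2 + k := by omega
  have hperteam : ∀ i, 3 * wins r i + draws r i = 2 * (2 + k) - 1 ∧
      wins r i + draws r i + losses r i = 2 * (2 + k) - 2 := fun i =>
    ⟨(pts_eq r i).symm.trans (h i), wdl_eq r i⟩
  have hge1 : ∀ i ∈ (univ : Finset (Fin (2 + k))), 1 ≤ wins r i := by
    intro i _
    obtain ⟨h1, h2⟩ := hperteam i
    omega
  have hwins1 : ∀ i, wins r i = 1 := by
    have hsum1 : ∑ _j : Fin (2 + k), (1 : ℕ) = W := by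
      rw [hWn, Finset.sum_const, card_univ, Fintype.card_fin, smul_eq_mul, mul_one]
    intro i
    have := (Finset.sum_eq_sum_iff_of_le hge1).1 hsum1 i (Finset.mem_univ i)
    omega
  intro i
  obtain ⟨h1, h2⟩ := hperteam i
  have h3 := hwins1 i
  refine ⟨h3, ?_, ?_⟩ <;> omega
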